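/- Let the fundamental graph data with a set S be given, let Q : V* → ℝ be a potential, and let α, α° : A* → ℝ be two 1-forms both vanishing outside S ∪ S̄ (with the same index map τ). Set C = 2 · max_{u∈V*} Σ_{e ∈ S∪S̄, o(e)=u} |sin((α°(e) − α(e))/2)|. Then for every n ∈ {1,…,ν} and every θ ∈ ℝ^d one has |λ_{α°,n}(θ) − λ_{α,n}(θ)| ≤ C; in particular the band endpoints satisfy |sup_θ λ_{α°,n}(θ) − sup_θ λ_{α,n}(θ)| ≤ C and |inf_θ λ_{α°,n}(θ) − inf_θ λ_{α,n}(θ)| ≤ C. -/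

import Mathlib

open scoped BigOperators
open Matrix Polynomial

noncomputable section

/-- Phase `α(e) + ⟨τ(e), θ⟩` of an edge. -/
def edgePhase {E : Type*} {d : ℕ} (α : E → ℝ) (τ : E → Fin d → ℤ)
    (θ : Fin d → ℝ) (e : E) : ℝ :=
  α e + ∑ j, (τ e j : ℝ) * θ j

/-- Degree of a vertex: the number of oriented edges starting at it. -/
def vertexDeg {E : Type*} [Fintype E] {ν : ℕ} (o : E → Fin ν) (v : Fin ν) : ℕ :=
  (Finset.univ.filter fun e => o e = v).card

/-- The fiber magnetic Laplacian `Δ_α(θ)` as a `ν × ν` complex matrix. -/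
def fiberLap {E : Type*} [Fintype E] {d ν : ℕ} (o t : E → Fin ν)
    (τ : E → Fin d → ℤ) (α : E → ℝ) (θ : Fin d → ℝ) : Matrix (Fin ν) (Fin ν) ℂ :=
  fun v u => (vertexDeg o v : ℂ) * (if v = u then 1 else 0)
    - ∑ e ∈ Finset.univ.filter (fun e => o e = v ∧ t e = u),
        Complex.exp (Complex.I * (edgePhase α τ θ e : ℝ))

/-- The fiber magnetic Schrödinger operator `H_α(θ) = Δ_α(θ) + diag Q`. -/
def fiberSch {E : Type*} [Fintype E] {d ν : ℕ} (o t : E → Fin ν)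
    (τ : E → Fin d → ℤ) (α : E → ℝ) (Q : Fin ν → ℝ) (θ : Fin d → ℝ) :
    Matrix (Fin ν) (Fin ν) ℂ :=
  fiberLap o t τ α θ + Matrix.diagonal (fun v => (Q v : ℂ))

section AuxSpectral
variable {ν : ℕ}

lemma coef_zero_of_span (v : OrthonormalBasis (Fin ν) ℂ (EuclideanSpace ℂ (Fin ν)))
    (I : Set (Fin ν)) {x : EuclideanSpace ℂ (Fin ν)}
    (hx : x ∈ Submodule.span ℂ (v '' I)) {i : Fin ν} (hi : i ∉ I) :
    (inner ℂ (v i) x : ℂ) = 0 := by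
  induction hx using Submodule.span_induction with
  | mem y hy =>
      obtain ⟨j, hj, rfl⟩ := hy
      have := v.orthonormal
      rw [orthonormal_iff_ite] at this
      rw [this i j, if_neg (by rintro rfl; exact hi hj)]
  | zero => simp
  | add y z _ _ hy hz => rw [inner_add_right, hy, hz, add_zero]
  | smul a y _ hy => rw [inner_smul_right, hy, mul_zero]

lemma inner_map_eq_sum (T : EuclideanSpace ℂ (Fin ν) →ₗ[ℂ] EuclideanSpace ℂ (Fin ν))
    (v : OrthonormalBasis (Fin ν) ℂ (EuclideanSpace ℂ (Fin ν)))
    (a : Fin ν → ℝ) (hv : ∀ i, T (v i) = (a i : ℂ) • v i) (x : EuclideanSpace ℂ (Fin ν)) :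
    (inner ℂ x (T x) : ℂ) = ∑ i, (a i : ℝ) * (Complex.normSq (inner ℂ (v i) x : ℂ) : ℂ) := by
  set c : Fin ν → ℂ := fun i => (inner ℂ (v i) x : ℂ) with hc
  have hx : x = ∑ i, c i • v i := (v.sum_repr' x).symm
  have hTx : T x = ∑ i, ((a i : ℂ) * c i) • v i := by
    rw [hx, map_sum]
    refine Finset.sum_congr rfl fun i _ => ?_
    rw [_root_.map_smul, hv i, smul_smul, mul_comm]
  rw [hTx, inner_sum]
  refine Finset.sum_congr rfl fun i _ => ?_
  rw [inner_smul_right]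
  have : (inner ℂ x (v i) : ℂ) = starRingEnd ℂ (c i) := by rw [hc, ← inner_conj_symm]
  rw [this, mul_assoc, Complex.mul_conj]

lemma norm_sq_eq_sum_coef (v : OrthonormalBasis (Fin ν) ℂ (EuclideanSpace ℂ (Fin ν)))
    (x : EuclideanSpace ℂ (Fin ν)) :
    (‖x‖ : ℝ) ^ 2 = ∑ i, Complex.normSq (inner ℂ (v i) x : ℂ) := by
  have := inner_map_eq_sum (LinearMap.id) v (fun _ => 1) (by intro i; simp) x
  have h2 : (inner ℂ x x : ℂ) = ((‖x‖ : ℝ) ^ 2 : ℝ) := by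
    rw [@inner_self_eq_norm_sq_to_K ℂ]; norm_num
  simp only [LinearMap.id_apply, Complex.ofReal_one, one_mul] at this
  rw [h2] at this
  exact_mod_cast this

lemma quad_le_of_span (T : EuclideanSpace ℂ (Fin ν) →ₗ[ℂ] EuclideanSpace ℂ (Fin ν))
    (v : OrthonormalBasis (Fin ν) ℂ (EuclideanSpace ℂ (Fin ν)))
    (a : Fin ν → ℝ) (hv : ∀ i, T (v i) = (a i : ℂ) • v i)
    (I : Set (Fin ν)) (cst : ℝ) (hcst : ∀ i ∈ I, a i ≤ cst)
    {x : EuclideanSpace ℂ (Fin ν)} (hx : x ∈ Submodule.span ℂ (v '' I)) :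
    (inner ℂ x (T x) : ℂ).re ≤ cst * ‖x‖ ^ 2 := by
  have h1 := inner_map_eq_sum T v a hv x
  have h2 : (inner ℂ x (T x) : ℂ).re = ∑ i, a i * Complex.normSq (inner ℂ (v i) x : ℂ) := by
    rw [h1]; push_cast; simp
  rw [h2, norm_sq_eq_sum_coef v x, Finset.mul_sum]
  refine Finset.sum_le_sum fun i _ => ?_
  by_cases hi : i ∈ I
  · exact mul_le_mul_of_nonneg_right (hcst i hi) (Complex.normSq_nonneg _)
  · rw [coef_zero_of_span v I hx hi]; simp

lemma quad_ge_of_span (T : EuclideanSpace ℂ (Fin ν) →ₗ[ℂ] EuclideanSpace ℂ (Fin ν))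
    (v : OrthonormalBasis (Fin ν) ℂ (EuclideanSpace ℂ (Fin ν)))
    (a : Fin ν → ℝ) (hv : ∀ i, T (v i) = (a i : ℂ) • v i)
    (I : Set (Fin ν)) (cst : ℝ) (hcst : ∀ i ∈ I, cst ≤ a i)
    {x : EuclideanSpace ℂ (Fin ν)} (hx : x ∈ Submodule.span ℂ (v '' I)) :
    cst * ‖x‖ ^ 2 ≤ (inner ℂ x (T x) : ℂ).re := by
  have h1 := inner_map_eq_sum T v a hv x
  have h2 : (inner ℂ x (T x) : ℂ).re = ∑ i, a i * Complex.normSq (inner ℂ (v i) x : ℂ) := by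
    rw [h1]; push_cast; simp
  rw [h2, norm_sq_eq_sum_coef v x, Finset.mul_sum]
  refine Finset.sum_le_sum fun i _ => ?_
  by_cases hi : i ∈ I
  · exact mul_le_mul_of_nonneg_right (hcst i hi) (Complex.normSq_nonneg _)
  · rw [coef_zero_of_span v I hx hi]; simp

lemma finrank_span_onb (v : OrthonormalBasis (Fin ν) ℂ (EuclideanSpace ℂ (Fin ν)))
    (I : Finset (Fin ν)) :
    Module.finrank ℂ (Submodule.span ℂ (v '' ↑I)) = I.card := by
  have hli : LinearIndependent ℂ (fun i : (↑I : Set (Fin ν)) => v i) :=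
    (v.orthonormal.comp _ Subtype.val_injective).linearIndependent
  have himg : v '' ↑I = Set.range (fun i : (↑I : Set (Fin ν)) => v i) := Set.image_eq_range _ _
  rw [himg, finrank_span_eq_card hli]
  simp

lemma weyl_one_sided {T T' : EuclideanSpace ℂ (Fin ν) →ₗ[ℂ] EuclideanSpace ℂ (Fin ν)}
    {v w : OrthonormalBasis (Fin ν) ℂ (EuclideanSpace ℂ (Fin ν))}
    {a b : Fin ν → ℝ} (ha : Monotone a) (hb : Monotone b)
    (hv : ∀ i, T (v i) = (a i : ℂ) • v i) (hw : ∀ i, T' (w i) = (b i : ℂ) • w i)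
    {C : ℝ} (hC : ∀ x : EuclideanSpace ℂ (Fin ν),
      ((inner ℂ x (T' x) : ℂ) - (inner ℂ x (T x) : ℂ)).re ≤ C * ‖x‖ ^ 2)
    (n : Fin ν) : b n ≤ a n + C := by
  set W1 := Submodule.span ℂ (v '' ↑(Finset.Iic n)) with hW1
  set W2 := Submodule.span ℂ (w '' ↑(Finset.Ici n)) with hW2
  have hd1 : Module.finrank ℂ W1 = n + 1 := by rw [hW1, finrank_span_onb, Fin.card_Iic]
  have hd2 : Module.finrank ℂ W2 = ν - n := by rw [hW2, finrank_span_onb, Fin.card_Ici]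
  have hsum := Submodule.finrank_sup_add_finrank_inf_eq W1 W2
  have hle : Module.finrank ℂ ↥(W1 ⊔ W2) ≤ ν := by
    simpa [finrank_euclideanSpace_fin] using Submodule.finrank_le (W1 ⊔ W2)
  have hpos : 0 < Module.finrank ℂ ↥(W1 ⊓ W2) := by
    have hn : (n : ℕ) < ν := n.isLt
    omega
  obtain ⟨x, hx, hx0⟩ : ∃ x ∈ W1 ⊓ W2, x ≠ 0 := by
    rw [← Submodule.ne_bot_iff]
    intro hbot
    rw [hbot, finrank_bot] at hpos
    exact lt_irrefl 0 hpos
  obtain ⟨hx1, hx2⟩ := Submodule.mem_inf.mp hx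
  have hq1 : (inner ℂ x (T x) : ℂ).re ≤ a n * ‖x‖ ^ 2 :=
    quad_le_of_span T v a hv _ (a n) (fun i hi => ha (by simpa using hi)) hx1
  have hq2 : b n * ‖x‖ ^ 2 ≤ (inner ℂ x (T' x) : ℂ).re :=
    quad_ge_of_span T' w b hw _ (b n) (fun i hi => hb (by simpa using hi)) hx2
  have hnorm : 0 < ‖x‖ ^ 2 := by
    have := norm_pos_iff.mpr hx0
    positivity
  have := hC x
  rw [Complex.sub_re] at this
  nlinarith

lemma charpoly_diag (d : Fin ν → ℂ) : (diagonal d).charpoly = ∏ i, (X - C (d i)) := by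
  rw [Matrix.charpoly_of_upperTriangular (diagonal d) (Matrix.blockTriangular_diagonal d)]
  simp

lemma charpoly_unitary_conj (U : Matrix.unitaryGroup (Fin ν) ℂ) (D : Matrix (Fin ν) (Fin ν) ℂ) :
    ((U : Matrix (Fin ν) (Fin ν) ℂ) * D * (star U : Matrix (Fin ν) (Fin ν) ℂ)).charpoly
      = D.charpoly := by
  let f : ℂ →+* ℂ[X] := (C : ℂ →+* ℂ[X])
  have hU : (U : Matrix (Fin ν) (Fin ν) ℂ).map f * (star U : Matrix (Fin ν) (Fin ν) ℂ).map f
      = 1 := by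
    rw [← Matrix.map_mul]
    have : (U : Matrix (Fin ν) (Fin ν) ℂ) * (star U : Matrix (Fin ν) (Fin ν) ℂ) = 1 :=
      Matrix.mem_unitaryGroup_iff.mp U.2
    rw [this]
    simp [f]
  have hcm : charmatrix ((U : Matrix (Fin ν) (Fin ν) ℂ) * D * star (U : Matrix (Fin ν) (Fin ν) ℂ))
      = (U : Matrix (Fin ν) (Fin ν) ℂ).map f * charmatrix D
        * (star U : Matrix (Fin ν) (Fin ν) ℂ).map f := by
    unfold charmatrix
    rw [mul_sub, sub_mul]
    congr 1
    · have h1 : (U : Matrix (Fin ν) (Fin ν) ℂ).map f * Matrix.scalar (Fin ν) (X : ℂ[X])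
          = Matrix.scalar (Fin ν) (X : ℂ[X]) * (U : Matrix (Fin ν) (Fin ν) ℂ).map f :=
        (Matrix.scalar_commute (X : ℂ[X]) (fun r => (Commute.all _ _)) _).symm
      rw [h1, mul_assoc, hU, mul_one]
    · simp only [RingHom.mapMatrix_apply]
      rw [← Matrix.map_mul, ← Matrix.map_mul]
  rw [Matrix.charpoly, hcm, det_mul, det_mul, Matrix.charpoly]
  have : ((U : Matrix (Fin ν) (Fin ν) ℂ).map f).det
      * ((star U : Matrix (Fin ν) (Fin ν) ℂ).map f).det = 1 := by
    rw [← det_mul, hU, det_one]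
  calc ((U : Matrix (Fin ν) (Fin ν) ℂ).map f).det * (charmatrix D).det
        * ((star U : Matrix (Fin ν) (Fin ν) ℂ).map f).det
      = (charmatrix D).det * (((U : Matrix (Fin ν) (Fin ν) ℂ).map f).det
        * ((star U : Matrix (Fin ν) (Fin ν) ℂ).map f).det) := by ring
    _ = (charmatrix D).det := by rw [this, mul_one]

lemma herm_charpoly {A : Matrix (Fin ν) (Fin ν) ℂ} (hA : A.IsHermitian) :
    A.charpoly = ∏ i, (X - C ((hA.eigenvalues i : ℝ) : ℂ)) := by
  conv_lhs => rw [hA.spectral_theorem, Unitary.conjStarAlgAut_apply]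
  rw [charpoly_unitary_conj hA.eigenvectorUnitary, charpoly_diag]
  rfl

lemma multiset_eq_of_charpoly {A : Matrix (Fin ν) (Fin ν) ℂ} (hA : A.IsHermitian)
    {lam : Fin ν → ℝ}
    (hchar : A.charpoly = ∏ n, (X - C ((lam n : ℝ) : ℂ))) :
    Multiset.map lam Finset.univ.val = Multiset.map hA.eigenvalues Finset.univ.val := by
  have h1 : (∏ n, (X - C ((lam n : ℝ) : ℂ)))
      = ∏ i, (X - C ((hA.eigenvalues i : ℝ) : ℂ)) := by
    rw [← hchar, herm_charpoly hA]
  have hroots : ∀ (f : Fin ν → ℝ),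
      (∏ n, (X - C ((f n : ℝ) : ℂ))).roots
        = Multiset.map (fun r : ℝ => (r : ℂ)) (Multiset.map f Finset.univ.val) := by
    intro f
    have : (∏ n, (X - C ((f n : ℝ) : ℂ)))
        = (Multiset.map (fun a : ℂ => X - C a)
            (Multiset.map (fun r : ℝ => (r : ℂ)) (Multiset.map f Finset.univ.val))).prod := by
      rw [Multiset.map_map, Multiset.map_map, Finset.prod_eq_multiset_prod]
      simp [Function.comp]
    rw [this, roots_multiset_prod_X_sub_C]
  have h2 := congrArg Polynomial.roots h1
  rw [hroots lam, hroots hA.eigenvalues] at h2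
  exact Multiset.map_injective Complex.ofReal_injective h2

lemma exists_onb_of_charpoly {A : Matrix (Fin ν) (Fin ν) ℂ} (hA : A.IsHermitian)
    {lam : Fin ν → ℝ} (hmono : Monotone lam)
    (hchar : A.charpoly = ∏ n, (X - C ((lam n : ℝ) : ℂ))) :
    ∃ w : OrthonormalBasis (Fin ν) ℂ (EuclideanSpace ℂ (Fin ν)),
      ∀ i, Matrix.toEuclideanLin A (w i) = ((lam i : ℝ) : ℂ) • (w i) := by
  set eig := hA.eigenvalues with heig
  set σ := Tuple.sort eig with hσ
  have hms := multiset_eq_of_charpoly hA hchar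
  have hperm : Multiset.map (eig ∘ σ) Finset.univ.val = Multiset.map eig Finset.univ.val := by
    have h0 : Multiset.map (⇑σ) Finset.univ.val = Finset.univ.val := by
      have h := congrArg Finset.val (Finset.map_univ_equiv σ)
      rw [Finset.map_val] at h
      simpa using h
    calc Multiset.map (eig ∘ ⇑σ) Finset.univ.val
        = Multiset.map eig (Multiset.map (⇑σ) Finset.univ.val) :=
          (Multiset.map_map _ _ _).symm
      _ = Multiset.map eig Finset.univ.val := by rw [h0]
  have hlam : lam = eig ∘ σ := by
    have hperm' : List.Perm (List.ofFn lam) (List.ofFn (eig ∘ σ)) := by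
      rw [← Multiset.coe_eq_coe, ← Fin.univ_val_map, ← Fin.univ_val_map, hms, hperm]
    have hs1 : (List.ofFn lam).Pairwise (· ≤ ·) := (List.sortedLE_ofFn_iff.mpr hmono).pairwise
    have hs2 : (List.ofFn (eig ∘ σ)).Pairwise (· ≤ ·) :=
      (List.sortedLE_ofFn_iff.mpr (Tuple.monotone_sort eig)).pairwise
    exact List.ofFn_injective (List.Perm.eq_of_pairwise' hs1 hs2 hperm')
  refine ⟨hA.eigenvectorBasis.reindex σ.symm, fun i => ?_⟩
  rw [OrthonormalBasis.reindex_apply]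
  simp only [Equiv.symm_symm]
  have h := hA.mulVec_eigenvectorBasis (σ i)
  have hlam' : lam i = eig (σ i) := by rw [hlam]; rfl
  rw [hlam']
  apply WithLp.ofLp_injective 2
  rw [Matrix.ofLp_toEuclideanLin_apply]
  rw [h]
  rfl

lemma schur_bound (M : Matrix (Fin ν) (Fin ν) ℂ)
    (hsym : ∀ v u, ‖M v u‖ = ‖M u v‖)
    (K : ℝ) (hK : ∀ v, ∑ u, ‖M v u‖ ≤ K)
    (x : EuclideanSpace ℂ (Fin ν)) :
    |(inner ℂ x ((Matrix.toEuclideanLin M) x) : ℂ).re| ≤ K * ‖x‖ ^ 2 := by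
  set y : Fin ν → ℂ := fun i => x i with hy
  have hN : ‖x‖ ^ 2 = ∑ v, ‖y v‖ ^ 2 := by
    rw [EuclideanSpace.norm_eq, Real.sq_sqrt (by positivity)]
  have hinner : (inner ℂ x ((Matrix.toEuclideanLin M) x) : ℂ)
      = ∑ v, (starRingEnd ℂ) (y v) * (M *ᵥ y) v := by
    rw [Matrix.toEuclideanLin_apply, PiLp.inner_apply]
    simp only [RCLike.inner_apply']
    rfl
  have hmv : ∀ v, ‖(M *ᵥ y) v‖ ≤ ∑ u, ‖M v u‖ * ‖y u‖ := by
    intro v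
    have : (M *ᵥ y) v = ∑ u, M v u * y u := rfl
    rw [this]
    refine le_trans (norm_sum_le _ _) ?_
    exact le_of_eq (Finset.sum_congr rfl fun u _ => norm_mul _ _)
  have step1 : |(inner ℂ x ((Matrix.toEuclideanLin M) x) : ℂ).re|
      ≤ ∑ v, ‖y v‖ * (∑ u, ‖M v u‖ * ‖y u‖) := by
    rw [hinner]
    refine le_trans (Complex.abs_re_le_norm _) ?_
    refine le_trans (norm_sum_le _ _) ?_
    refine Finset.sum_le_sum fun v _ => ?_
    rw [norm_mul, Complex.norm_conj]
    exact mul_le_mul_of_nonneg_left (hmv v) (norm_nonneg _)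
  have step2 : ∑ v, ‖y v‖ * (∑ u, ‖M v u‖ * ‖y u‖)
      ≤ ∑ v, ∑ u, (‖M v u‖ * (‖y v‖ ^ 2 / 2)
          + ‖M v u‖ * (‖y u‖ ^ 2 / 2)) := by
    refine Finset.sum_le_sum fun v _ => ?_
    rw [Finset.mul_sum]
    refine Finset.sum_le_sum fun u _ => ?_
    have h1 : ‖y v‖ * (‖M v u‖ * ‖y u‖)
        = ‖M v u‖ * (‖y v‖ * ‖y u‖) := by ring
    have h2 : ‖M v u‖ * (‖y v‖ ^ 2 / 2)
          + ‖M v u‖ * (‖y u‖ ^ 2 / 2)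
        = ‖M v u‖ * ((‖y v‖ ^ 2 + ‖y u‖ ^ 2) / 2) := by ring
    rw [h1, h2]
    refine mul_le_mul_of_nonneg_left ?_ (norm_nonneg _)
    nlinarith [sq_nonneg (‖y v‖ - ‖y u‖)]
  have half : ∀ g : Fin ν → ℝ, (∀ u, 0 ≤ g u) →
      ∑ v, ∑ u, ‖M v u‖ * (g v / 2) ≤ ∑ v, K * (g v / 2) := by
    intro g hg
    refine Finset.sum_le_sum fun v _ => ?_
    rw [← Finset.sum_mul]
    exact mul_le_mul_of_nonneg_right (hK v) (div_nonneg (hg v) (by norm_num))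
  have step3 : ∑ v, ∑ u, (‖M v u‖ * (‖y v‖ ^ 2 / 2)
          + ‖M v u‖ * (‖y u‖ ^ 2 / 2))
      ≤ K * ∑ v, ‖y v‖ ^ 2 := by
    have hsa : ∑ v, ∑ u, (‖M v u‖ * (‖y v‖ ^ 2 / 2)
          + ‖M v u‖ * (‖y u‖ ^ 2 / 2))
        = (∑ v, ∑ u, ‖M v u‖ * (‖y v‖ ^ 2 / 2))
          + ∑ v, ∑ u, ‖M v u‖ * (‖y u‖ ^ 2 / 2) := by
      rw [← Finset.sum_add_distrib]
      exact Finset.sum_congr rfl fun v _ => Finset.sum_add_distrib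
    have hB : ∑ v, ∑ u, ‖M v u‖ * (‖y u‖ ^ 2 / 2)
        = ∑ v, ∑ u, ‖M v u‖ * (‖y v‖ ^ 2 / 2) := by
      rw [Finset.sum_comm]
      refine Finset.sum_congr rfl fun v _ => Finset.sum_congr rfl fun u _ => ?_
      rw [hsym v u]
    have h1 := half (fun v => ‖y v‖ ^ 2) (fun u => sq_nonneg _)
    rw [hsa, hB]
    calc (∑ v, ∑ u, ‖M v u‖ * (‖y v‖ ^ 2 / 2))
          + ∑ v, ∑ u, ‖M v u‖ * (‖y v‖ ^ 2 / 2)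
        ≤ (∑ v, K * (‖y v‖ ^ 2 / 2)) + ∑ v, K * (‖y v‖ ^ 2 / 2) :=
          add_le_add h1 h1
      _ = K * ∑ v, ‖y v‖ ^ 2 := by
          rw [← Finset.sum_add_distrib, Finset.mul_sum]
          exact Finset.sum_congr rfl fun v _ => by ring
  calc |(inner ℂ x ((Matrix.toEuclideanLin M) x) : ℂ).re|
      ≤ ∑ v, ‖y v‖ * (∑ u, ‖M v u‖ * ‖y u‖) := step1
    _ ≤ ∑ v, ∑ u, (‖M v u‖ * (‖y v‖ ^ 2 / 2)
          + ‖M v u‖ * (‖y u‖ ^ 2 / 2)) := step2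
    _ ≤ K * ∑ v, ‖y v‖ ^ 2 := step3
    _ = K * ‖x‖ ^ 2 := by rw [hN]

end AuxSpectral


section MoreAux
variable {ν : ℕ}

lemma eig_abs_bound {A : Matrix (Fin ν) (Fin ν) ℂ} (hA : A.IsHermitian)
    {lam : Fin ν → ℝ} (hmono : Monotone lam)
    (hchar : A.charpoly = ∏ n, (X - C ((lam n : ℝ) : ℂ)))
    (K : ℝ) (hK : ∀ v, ∑ u, ‖A v u‖ ≤ K) (n : Fin ν) : |lam n| ≤ K := by
  obtain ⟨w, hw⟩ := exists_onb_of_charpoly hA hmono hchar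
  have hsym : ∀ v u, ‖A v u‖ = ‖A u v‖ := by
    intro v u; rw [← hA.apply u v]; exact (Complex.norm_conj _).symm
  have hs := schur_bound A hsym K hK (w n)
  have hwn : ‖w n‖ = 1 := w.orthonormal.1 n
  have hinner : (inner ℂ (w n) ((Matrix.toEuclideanLin A) (w n)) : ℂ) = ((lam n : ℝ) : ℂ) := by
    rw [hw n, inner_smul_right]
    have h1 : (inner ℂ (w n) (w n) : ℂ) = 1 := by
      rw [@inner_self_eq_norm_sq_to_K ℂ, hwn]; norm_num
    rw [h1, mul_one]
  rw [hinner] at hs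
  simpa [hwn] using hs

lemma weyl_matrix {A A' : Matrix (Fin ν) (Fin ν) ℂ} (hA : A.IsHermitian) (hA' : A'.IsHermitian)
    {lam lamo : Fin ν → ℝ} (hm : Monotone lam) (hm' : Monotone lamo)
    (hc : A.charpoly = ∏ n, (X - C ((lam n : ℝ) : ℂ)))
    (hc' : A'.charpoly = ∏ n, (X - C ((lamo n : ℝ) : ℂ)))
    (Cst : ℝ) (hrow : ∀ v, ∑ u, ‖(A' - A) v u‖ ≤ Cst) (n : Fin ν) :
    |lamo n - lam n| ≤ Cst := by
  obtain ⟨w, hw⟩ := exists_onb_of_charpoly hA hm hc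
  obtain ⟨w', hw'⟩ := exists_onb_of_charpoly hA' hm' hc'
  have hP : (A' - A).IsHermitian := hA'.sub hA
  have hsym : ∀ v u, ‖(A' - A) v u‖ = ‖(A' - A) u v‖ := fun v u => by
    rw [← hP.apply u v]; exact (Complex.norm_conj _).symm
  have hsch := fun x => schur_bound (A' - A) hsym Cst hrow x
  have hdi : ∀ x : EuclideanSpace ℂ (Fin ν),
      (inner ℂ x ((Matrix.toEuclideanLin A') x) : ℂ) - (inner ℂ x ((Matrix.toEuclideanLin A) x) : ℂ)
        = (inner ℂ x ((Matrix.toEuclideanLin (A' - A)) x) : ℂ) := by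
    intro x
    rw [map_sub, LinearMap.sub_apply, inner_sub_right]
  have h1 : lamo n ≤ lam n + Cst := by
    refine weyl_one_sided hm hm' hw hw' (fun x => ?_) n
    rw [hdi x]
    exact le_trans (le_abs_self _) (hsch x)
  have h2 : lam n ≤ lamo n + Cst := by
    refine weyl_one_sided hm' hm hw' hw (fun x => ?_) n
    have hx : (inner ℂ x ((Matrix.toEuclideanLin A) x) : ℂ)
          - (inner ℂ x ((Matrix.toEuclideanLin A') x) : ℂ)
        = -((inner ℂ x ((Matrix.toEuclideanLin (A' - A)) x) : ℂ)) := by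
      rw [← hdi x]; ring
    rw [hx, Complex.neg_re]
    exact le_trans (neg_le_abs _) (hsch x)
  rw [abs_sub_le_iff]
  exact ⟨by linarith, by linarith⟩

lemma abs_ciSup_sub {ι : Type*} [Nonempty ι] {f g : ι → ℝ} {C K : ℝ}
    (hfg : ∀ i, |f i - g i| ≤ C) (hf : ∀ i, |f i| ≤ K) (hg : ∀ i, |g i| ≤ K) :
    |(⨆ i, f i) - ⨆ i, g i| ≤ C := by
  have hbf : BddAbove (Set.range f) := ⟨K, by rintro x ⟨i, rfl⟩; exact (abs_le.mp (hf i)).2⟩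
  have hbg : BddAbove (Set.range g) := ⟨K, by rintro x ⟨i, rfl⟩; exact (abs_le.mp (hg i)).2⟩
  rw [abs_sub_le_iff]
  constructor
  · rw [sub_le_iff_le_add]
    refine ciSup_le fun i => ?_
    have h1 := (abs_le.mp (hfg i)).2
    have h2 : g i ≤ ⨆ i, g i := le_ciSup hbg i
    linarith
  · rw [sub_le_iff_le_add]
    refine ciSup_le fun i => ?_
    have h1 := (abs_le.mp (hfg i)).1
    have h2 : f i ≤ ⨆ i, f i := le_ciSup hbf i
    linarith

lemma abs_ciInf_sub {ι : Type*} [Nonempty ι] {f g : ι → ℝ} {C K : ℝ}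
    (hfg : ∀ i, |f i - g i| ≤ C) (hf : ∀ i, |f i| ≤ K) (hg : ∀ i, |g i| ≤ K) :
    |(⨅ i, f i) - ⨅ i, g i| ≤ C := by
  have hbf : BddBelow (Set.range f) := ⟨-K, by rintro x ⟨i, rfl⟩; exact (abs_le.mp (hf i)).1⟩
  have hbg : BddBelow (Set.range g) := ⟨-K, by rintro x ⟨i, rfl⟩; exact (abs_le.mp (hg i)).1⟩
  rw [abs_sub_le_iff]
  constructor
  · have h : (⨅ i, f i) - C ≤ ⨅ i, g i := by
      refine le_ciInf fun i => ?_
      have h1 := ciInf_le hbf i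
      have h2 := (abs_le.mp (hfg i)).2
      linarith
    linarith
  · have h : (⨅ i, g i) - C ≤ ⨅ i, f i := by
      refine le_ciInf fun i => ?_
      have h1 := ciInf_le hbg i
      have h2 := (abs_le.mp (hfg i)).1
      linarith
    linarith
end MoreAux

section Graph
variable {d ν : ℕ} {E : Type*} [Fintype E] [DecidableEq E]
  (o t : E → Fin ν) (inv : E → E)
  (τ : E → Fin d → ℤ) (α : E → ℝ) (Q : Fin ν → ℝ) (θ : Fin d → ℝ)

lemma edgePhase_inv (hinv : ∀ e, inv (inv e) = e) (ho : ∀ e, o (inv e) = t e)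
    (hτ : ∀ e, τ (inv e) = - τ e) (hα : ∀ e, α (inv e) = - α e) (e : E) :
    edgePhase α τ θ (inv e) = - edgePhase α τ θ e := by
  unfold edgePhase
  rw [hα e, hτ e]
  simp only [Pi.neg_apply, Int.cast_neg, neg_mul, Finset.sum_neg_distrib]
  ring

lemma fiberSch_isHermitian (hinv : ∀ e, inv (inv e) = e)
    (ho : ∀ e, o (inv e) = t e) (ht : ∀ e, t (inv e) = o e)
    (hτ : ∀ e, τ (inv e) = - τ e) (hα : ∀ e, α (inv e) = - α e) :
    (fiberSch o t τ α Q θ).IsHermitian := by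
  refine Matrix.IsHermitian.ext fun i j => ?_
  unfold fiberSch
  simp only [Matrix.add_apply]
  unfold fiberLap
  simp only [Matrix.add_apply, Matrix.diagonal_apply, star_sub, star_add, star_mul']
  have hsum : star (∑ e ∈ Finset.univ.filter (fun e => o e = j ∧ t e = i),
        Complex.exp (Complex.I * (edgePhase α τ θ e : ℝ)))
      = ∑ e ∈ Finset.univ.filter (fun e => o e = i ∧ t e = j),
        Complex.exp (Complex.I * (edgePhase α τ θ e : ℝ)) := by
    rw [star_sum]
    refine Finset.sum_nbij' inv inv ?_ ?_ ?_ ?_ ?_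
    · intro e he
      simp only [Finset.mem_filter, Finset.mem_univ, true_and] at he ⊢
      rw [ho e, ht e]; exact ⟨he.2, he.1⟩
    · intro e he
      simp only [Finset.mem_filter, Finset.mem_univ, true_and] at he ⊢
      rw [ho e, ht e]; exact ⟨he.2, he.1⟩
    · intro e _; exact hinv e
    · intro e _; exact hinv e
    · intro e _
      rw [edgePhase_inv o t inv τ α θ hinv ho hτ hα e]
      show (starRingEnd ℂ) (Complex.exp (Complex.I * (edgePhase α τ θ e : ℝ))) = _
      rw [← Complex.exp_conj]
      congr 1
      simp only [_root_.map_mul, Complex.conj_I, Complex.conj_ofReal, Complex.ofReal_neg]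
      ring
  rw [hsum]
  by_cases h : i = j
  · subst h; simp
  · simp [h, Ne.symm h]

lemma exp_diff_abs (a b : ℝ) : ‖Complex.exp (Complex.I * a) - Complex.exp (Complex.I * b)‖
    = 2 * |Real.sin ((a - b) / 2)| := by
  have h : Complex.exp (Complex.I * a) - Complex.exp (Complex.I * b)
      = Complex.exp (Complex.I * (((a+b)/2 : ℝ))) * (2 * Complex.I * Complex.sin (((a-b)/2 : ℝ))) := by
    rw [Complex.sin]
    have e1 : Complex.exp (Complex.I * a) = Complex.exp (Complex.I * (((a+b)/2 : ℝ))) * Complex.exp (((a-b)/2 : ℝ) * Complex.I) := by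
      rw [← Complex.exp_add]; congr 1; push_cast; ring
    have e2 : Complex.exp (Complex.I * b) = Complex.exp (Complex.I * (((a+b)/2 : ℝ))) * Complex.exp (-(((a-b)/2 : ℝ)) * Complex.I) := by
      rw [← Complex.exp_add]; congr 1; push_cast; ring
    rw [e1, e2]
    ring_nf
    rw [Complex.I_sq]
    ring
  rw [h, norm_mul]
  rw [mul_comm Complex.I ((((a+b)/2 : ℝ)) : ℂ), Complex.norm_exp_ofReal_mul_I]
  simp only [norm_mul, Complex.norm_two, Complex.norm_I, one_mul, mul_one]
  rw [← Complex.ofReal_sin, Complex.norm_real, Real.norm_eq_abs]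

lemma sum_fiber_card (v : Fin ν) :
    ∑ u, (Finset.univ.filter (fun e => o e = v ∧ t e = u)).card = vertexDeg o v := by
  unfold vertexDeg
  rw [Finset.card_eq_sum_card_fiberwise (f := t) (t := Finset.univ) (fun x _ => Finset.mem_univ _)]
  refine Finset.sum_congr rfl fun u _ => ?_
  rw [Finset.filter_filter]

lemma sum_fiber_sum (v : Fin ν) (g : E → ℝ) :
    ∑ u, ∑ e ∈ Finset.univ.filter (fun e => o e = v ∧ t e = u), g e
      = ∑ e ∈ Finset.univ.filter (fun e => o e = v), g e := by
  rw [← Finset.sum_fiberwise_of_maps_to (g := t) (fun x _ => Finset.mem_univ _) g]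
  refine Finset.sum_congr rfl fun u _ => ?_
  rw [Finset.filter_filter]

lemma row_sum_sch_bound (v : Fin ν) :
    ∑ u, ‖(fiberSch o t τ α Q θ) v u‖
      ≤ 2 * (vertexDeg o v : ℝ) + |Q v| := by
  have hb : ∀ u, ‖(fiberSch o t τ α Q θ) v u‖
      ≤ (if v = u then ((vertexDeg o v : ℝ) + |Q v|) else 0)
        + ((Finset.univ.filter (fun e => o e = v ∧ t e = u)).card : ℝ) := by
    intro u
    unfold fiberSch
    simp only [Matrix.add_apply]
    unfold fiberLap
    simp only [Matrix.add_apply, Matrix.diagonal_apply]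
    have habs : ∀ (z w q : ℂ), ‖z - w + q‖ ≤ ‖z + q‖ + ‖w‖ := by
      intro z w q
      have h1 : z - w + q = (z + q) + (-w) := by ring
      rw [h1]
      refine le_trans (norm_add_le _ _) ?_
      rw [norm_neg]
    refine le_trans (habs _ _ _) (add_le_add ?_ ?_)
    · by_cases h : v = u
      · subst h
        simp only [if_pos rfl]
        refine le_trans (norm_add_le _ _) ?_
        simp [Complex.norm_real]
      · simp [h]
    · refine le_trans (norm_sum_le _ _) ?_
      rw [Finset.card_eq_sum_ones]
      push_cast
      refine le_of_eq (Finset.sum_congr rfl fun e _ => ?_)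
      rw [mul_comm]
      exact Complex.norm_exp_ofReal_mul_I _
  refine le_trans (Finset.sum_le_sum fun u _ => hb u) ?_
  rw [Finset.sum_add_distrib, Finset.sum_ite_eq Finset.univ v (fun _ => (vertexDeg o v : ℝ) + |Q v|)]
  have : ∑ u, ((Finset.univ.filter (fun e => o e = v ∧ t e = u)).card : ℝ)
      = (vertexDeg o v : ℝ) := by
    rw [← sum_fiber_card o t v]
    push_cast
    rfl
  rw [this]
  simp
  ring_nf
  simp [le_refl]

lemma row_sum_diff_bound (hinv : ∀ e, inv (inv e) = e)
    (αo : E → ℝ) (S : Finset E)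
    (hout : ∀ e, e ∉ S → inv e ∉ S → α e = 0 ∧ αo e = 0 ∧ τ e = 0)
    (v : Fin ν) :
    ∑ u, ‖(fiberSch o t τ αo Q θ - fiberSch o t τ α Q θ) v u‖
      ≤ 2 * ∑ e ∈ (S ∪ S.image inv).filter (fun e => o e = v),
          |Real.sin ((αo e - α e) / 2)| := by
  have hdiff : ∀ u, (fiberSch o t τ αo Q θ - fiberSch o t τ α Q θ) v u
      = ∑ e ∈ Finset.univ.filter (fun e => o e = v ∧ t e = u),
          (Complex.exp (Complex.I * (edgePhase α τ θ e : ℝ))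
            - Complex.exp (Complex.I * (edgePhase αo τ θ e : ℝ))) := by
    intro u
    simp only [Matrix.sub_apply]
    unfold fiberSch
    simp only [Matrix.add_apply]
    unfold fiberLap
    rw [Finset.sum_sub_distrib]
    ring
  have hterm : ∀ e, ‖Complex.exp (Complex.I * (edgePhase α τ θ e : ℝ))
        - Complex.exp (Complex.I * (edgePhase αo τ θ e : ℝ))‖
      = 2 * |Real.sin ((αo e - α e) / 2)| := by
    intro e
    rw [exp_diff_abs]
    have : (edgePhase α τ θ e - edgePhase αo τ θ e) / 2 = -((αo e - α e) / 2) := by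
      unfold edgePhase; ring
    rw [this, Real.sin_neg, abs_neg]
  have hstep : ∀ u, ‖(fiberSch o t τ αo Q θ - fiberSch o t τ α Q θ) v u‖
      ≤ ∑ e ∈ Finset.univ.filter (fun e => o e = v ∧ t e = u),
          2 * |Real.sin ((αo e - α e) / 2)| := by
    intro u
    rw [hdiff u]
    refine le_trans (norm_sum_le _ _) ?_
    exact le_of_eq (Finset.sum_congr rfl fun e _ => hterm e)
  refine le_trans (Finset.sum_le_sum fun u _ => hstep u) ?_
  rw [sum_fiber_sum o t v (fun e => 2 * |Real.sin ((αo e - α e) / 2)|)]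
  have hsub : (S ∪ S.image inv).filter (fun e => o e = v)
      ⊆ Finset.univ.filter (fun e => o e = v) := by
    intro e he
    simp only [Finset.mem_filter] at he ⊢
    exact ⟨Finset.mem_univ _, he.2⟩
  rw [Finset.mul_sum]
  have hzero : ∀ x ∈ Finset.univ.filter (fun e => o e = v),
      x ∉ (S ∪ S.image inv).filter (fun e => o e = v) →
        2 * |Real.sin ((αo x - α x) / 2)| = 0 := by
    intro e he hne
    simp only [Finset.mem_filter, Finset.mem_univ, true_and] at he
    have hnotmem : e ∉ S ∪ S.image inv := fun hmem => hne (Finset.mem_filter.mpr ⟨hmem, he⟩)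
    rw [Finset.mem_union] at hnotmem
    push_neg at hnotmem
    have hinvS : inv e ∉ S := fun hh =>
      hnotmem.2 (Finset.mem_image.mpr ⟨inv e, hh, hinv e⟩)
    obtain ⟨h1, h2, _⟩ := hout e hnotmem.1 hinvS
    rw [h1, h2]
    simp
  rw [← Finset.sum_subset hsub hzero]
end Graph

theorem magnetic_perturbation_eigenvalue_bound
    {d ν : ℕ} (hd : 1 ≤ d) (hν : 1 ≤ ν)
    {E : Type*} [Fintype E] [DecidableEq E]
    (o t : E → Fin ν) (inv : E → E)
    (hinv : ∀ e, inv (inv e) = e) (hfpf : ∀ e, inv e ≠ e)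
    (ho : ∀ e, o (inv e) = t e) (ht : ∀ e, t (inv e) = o e)
    (τ : E → Fin d → ℤ) (hτ : ∀ e, τ (inv e) = - τ e)
    (α αo : E → ℝ) (hα : ∀ e, α (inv e) = - α e) (hαo : ∀ e, αo (inv e) = - αo e)
    (S : Finset E) (hS : ∀ e ∈ S, inv e ∉ S)
    (hout : ∀ e, e ∉ S → inv e ∉ S → α e = 0 ∧ αo e = 0 ∧ τ e = 0)
    (Q : Fin ν → ℝ)
    -- eigenvalues of `H_α(θ)` with multiplicity, in increasing order
    (lam : (Fin d → ℝ) → Fin ν → ℝ)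
    (hmono : ∀ θ, Monotone (lam θ))
    (hroots : ∀ θ, (fiberSch o t τ α Q θ).charpoly
      = ∏ n : Fin ν, (X - C ((lam θ n : ℝ) : ℂ)))
    -- eigenvalues of `H_{α°}(θ)` with multiplicity, in increasing order
    (lamo : (Fin d → ℝ) → Fin ν → ℝ)
    (hmonoo : ∀ θ, Monotone (lamo θ))
    (hrootso : ∀ θ, (fiberSch o t τ αo Q θ).charpoly
      = ∏ n : Fin ν, (X - C ((lamo θ n : ℝ) : ℂ)))
    (Cst : ℝ)
    (hCst : Cst = 2 * Finset.univ.sup' ⟨⟨0, by omega⟩, Finset.mem_univ _⟩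
      (fun u : Fin ν => ∑ e ∈ (S ∪ S.image inv).filter (fun e => o e = u),
        |Real.sin ((αo e - α e) / 2)|)) :
    (∀ (n : Fin ν) (θ : Fin d → ℝ), |lamo θ n - lam θ n| ≤ Cst)
    ∧ (∀ n : Fin ν,
        |(⨆ θ : Fin d → ℝ, lamo θ n) - (⨆ θ : Fin d → ℝ, lam θ n)| ≤ Cst)
    ∧ (∀ n : Fin ν,
        |(⨅ θ : Fin d → ℝ, lamo θ n) - (⨅ θ : Fin d → ℝ, lam θ n)| ≤ Cst) := by
  classical
  have hA : ∀ θ, (fiberSch o t τ α Q θ).IsHermitian := fun θ =>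
    fiberSch_isHermitian o t inv τ α Q θ hinv ho ht hτ hα
  have hAo : ∀ θ, (fiberSch o t τ αo Q θ).IsHermitian := fun θ =>
    fiberSch_isHermitian o t inv τ αo Q θ hinv ho ht hτ hαo
  have hrow : ∀ (θ : Fin d → ℝ) (v : Fin ν),
      ∑ u, ‖(fiberSch o t τ αo Q θ - fiberSch o t τ α Q θ) v u‖ ≤ Cst := by
    intro θ v
    refine le_trans (row_sum_diff_bound o t inv τ α Q θ hinv αo S hout v) ?_
    rw [hCst]
    have h := Finset.le_sup' (b := v)
      (fun u : Fin ν => ∑ e ∈ (S ∪ S.image inv).filter (fun e => o e = u),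
        |Real.sin ((αo e - α e) / 2)|) (Finset.mem_univ v)
    exact mul_le_mul_of_nonneg_left h (by norm_num)
  have key : ∀ (n : Fin ν) (θ : Fin d → ℝ), |lamo θ n - lam θ n| ≤ Cst := fun n θ =>
    weyl_matrix (hA θ) (hAo θ) (hmono θ) (hmonoo θ) (hroots θ) (hrootso θ) Cst (hrow θ) n
  have hKrow : ∀ (β : E → ℝ) (θ : Fin d → ℝ) (v : Fin ν),
      ∑ u, ‖(fiberSch o t τ β Q θ) v u‖
        ≤ ∑ v, (2 * (vertexDeg o v : ℝ) + |Q v|) := by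
    intro β θ v
    refine le_trans (row_sum_sch_bound o t τ β Q θ v) ?_
    exact Finset.single_le_sum (f := fun v => 2 * (vertexDeg o v : ℝ) + |Q v|)
      (fun i _ => by positivity) (Finset.mem_univ v)
  have hb1 : ∀ (θ : Fin d → ℝ) (n : Fin ν),
      |lam θ n| ≤ ∑ v, (2 * (vertexDeg o v : ℝ) + |Q v|) := fun θ n =>
    eig_abs_bound (hA θ) (hmono θ) (hroots θ) _ (hKrow α θ) n
  have hb2 : ∀ (θ : Fin d → ℝ) (n : Fin ν),
      |lamo θ n| ≤ ∑ v, (2 * (vertexDeg o v : ℝ) + |Q v|) := fun θ n =>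
    eig_abs_bound (hAo θ) (hmonoo θ) (hrootso θ) _ (hKrow αo θ) n
  refine ⟨fun n θ => key n θ, fun n => ?_, fun n => ?_⟩
  · exact abs_ciSup_sub (fun θ => key n θ) (fun θ => hb2 θ n) (fun θ => hb1 θ n)
  · exact abs_ciInf_sub (fun θ => key n θ) (fun θ => hb2 θ n) (fun θ => hb1 θ n)

end
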